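/- In a free-by-cyclic group G = F ⋊_Φ ℤ, every slender subgroup is isomorphic to the trivial group, ℤ, or a semidirect product ℤ ⋊ ℤ. -/

import Mathlib

open Finsupp SemidirectProduct Multiplicative

noncomputable def shiftAut : Multiplicative ℤ →* MulAut (Multiplicative (ℤ →₀ ℤ)) :=
  MonoidHom.mk' (fun t => AddEquiv.toMultiplicative (Finsupp.domCongr (Equiv.addRight t.toAdd)))
    (by
      intro s t
      ext x : 1
      simp only [Finsupp.domCongr_apply, MulAut.mul_apply]
      show ofAdd (Finsupp.equivMapDomain _ _ : ℤ →₀ ℤ) = ofAdd (Finsupp.equivMapDomain _ (Finsupp.equivMapDomain _ _) : ℤ →₀ ℤ)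
      congr 1
      ext i
      simp only [Finsupp.equivMapDomain_apply]
      rw [toAdd_mul]
      congr 1
      simp only [Equiv.addRight_symm, Equiv.coe_addRight]
      omega)

lemma shiftAut_single (n : ℤ) :
    shiftAut (ofAdd n) (ofAdd (Finsupp.single 0 (1:ℤ))) = ofAdd (Finsupp.single n (1:ℤ)) := by
  show ofAdd (Finsupp.equivMapDomain (Equiv.addRight n) (Finsupp.single 0 1)) = _
  rw [Finsupp.equivMapDomain_single]
  norm_num

lemma closure_delta :
    Subgroup.closure (Set.range fun n : ℤ => (ofAdd (Finsupp.single n (1:ℤ)) :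
      Multiplicative (ℤ →₀ ℤ))) = ⊤ := by
  rw [eq_top_iff]
  rintro x -
  have : ∀ f : ℤ →₀ ℤ, (ofAdd f) ∈ Subgroup.closure
      (Set.range fun n : ℤ => (ofAdd (Finsupp.single n (1:ℤ)) : Multiplicative (ℤ →₀ ℤ))) := by
    intro f
    induction f using Finsupp.induction_linear with
    | zero => exact one_mem _
    | add f g hf hg => exact mul_mem hf hg
    | single a b =>
        have h1 : (Finsupp.single a b : ℤ →₀ ℤ) = b • Finsupp.single a 1 := by
          rw [Finsupp.smul_single', mul_one]
        rw [h1, ofAdd_zsmul]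
        exact zpow_mem (Subgroup.subset_closure (Set.mem_range_self a)) b
  exact this x.toAdd

lemma not_fg_finsupp : ¬ Group.FG (Multiplicative (ℤ →₀ ℤ)) := by
  intro h
  have h' : AddGroup.FG (ℤ →₀ ℤ) := AddGroup.fg_iff_mul_fg.2 h
  have : Module.Finite ℤ (ℤ →₀ ℤ) := Module.Finite.iff_addGroup_fg.2 h'
  have : Finite ℤ := Module.Finite.finite_basis (Finsupp.basisSingleOne : Module.Basis ℤ ℤ (ℤ →₀ ℤ))
  exact not_finite ℤ

lemma fg_of_mulEquiv {A B : Type*} [Group A] [Group B] (e : A ≃* B) (h : Group.FG A) :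
    Group.FG B := by
  haveI := h
  exact Group.fg_of_surjective (f := e.toMonoidHom) e.surjective

lemma not_fg_map_inl {ψ : Multiplicative ℤ →* MulAut (Multiplicative (ℤ →₀ ℤ))} :
    ¬ (Subgroup.map (inl : Multiplicative (ℤ →₀ ℤ) →* _ ⋊[ψ] Multiplicative ℤ) ⊤).FG := by
  intro h
  have h1 : Group.FG ↥(Subgroup.map (inl : Multiplicative (ℤ →₀ ℤ) →* _ ⋊[ψ] Multiplicative ℤ) ⊤) :=
    (Group.fg_iff_subgroup_fg _).2 h
  have e : Multiplicative (ℤ →₀ ℤ) ≃* ↥(Subgroup.map (inl : Multiplicative (ℤ →₀ ℤ) →* _ ⋊[ψ] Multiplicative ℤ) ⊤) :=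
    Subgroup.topEquiv.symm.trans (Subgroup.equivMapOfInjective ⊤ inl inl_injective)
  exact not_fg_finsupp (fg_of_mulEquiv e.symm h1)

noncomputable def freeGroupUnitMulEquiv : FreeGroup Unit ≃* Multiplicative ℤ :=
  MonoidHom.toMulEquiv
    (FreeGroup.lift fun _ => ofAdd 1)
    (zpowersHom _ (FreeGroup.of ()))
    (by
      apply FreeGroup.ext_hom
      intro a
      simp)
    (by
      apply MonoidHom.ext_mint
      simp)

theorem freeGroup_slender_aux {Q : Type*} [Group Q] [IsFreeGroup Q]
    (h : ∀ L : Subgroup Q, Group.FG L) :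
    Subsingleton Q ∨ Nonempty (Q ≃* Multiplicative ℤ) := by
  classical
  set ι := IsFreeGroup.Generators Q with hι
  have e : Q ≃* FreeGroup ι := IsFreeGroup.toFreeGroup Q
  by_cases hsub : Subsingleton ι
  · rcases isEmpty_or_nonempty ι with hemp | hne
    · left
      have h1 : ∀ x : FreeGroup ι, x = 1 := by
        intro x
        induction x using FreeGroup.induction_on with
        | C1 => rfl
        | of i => exact isEmptyElim i
        | inv_of i _ => exact isEmptyElim i
        | mul x y hx hy => rw [hx, hy, one_mul]
      exact ⟨fun a b => e.injective (by rw [h1 (e a), h1 (e b)])⟩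
    · right
      haveI : Unique ι := ⟨⟨hne.some⟩, fun a => Subsingleton.elim a hne.some⟩
      exact ⟨e.trans ((FreeGroup.freeGroupCongr (Equiv.ofUnique ι Unit)).trans
        freeGroupUnitMulEquiv)⟩
  · exfalso
    have : Nontrivial ι := not_subsingleton_iff_nontrivial.1 hsub
    obtain ⟨x, y, hxy⟩ := this.exists_pair_ne
    -- the receiving wreath-like group
    set W := Multiplicative (ℤ →₀ ℤ) ⋊[shiftAut] Multiplicative ℤ with hW
    set f : FreeGroup ι →* W := FreeGroup.lift fun i =>
      if i = x then inr (ofAdd 1) else if i = y then inl (ofAdd (Finsupp.single 0 1)) else 1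
      with hf
    set g : ℤ → FreeGroup ι := fun n => FreeGroup.of x ^ n * FreeGroup.of y * FreeGroup.of x ^ (-n)
      with hg
    have hfg : ∀ n : ℤ, f (g n) = inl (ofAdd (Finsupp.single n (1:ℤ))) := by
      intro n
      have hfx : f (FreeGroup.of x) = inr (ofAdd 1) := by simp [hf]
      have hfy : f (FreeGroup.of y) = inl (ofAdd (Finsupp.single 0 1)) := by
        simp [hf, hxy.symm]
      have hxn : ∀ m : ℤ, f (FreeGroup.of x ^ m) = inr (ofAdd m) := by
        intro m
        rw [map_zpow, hfx, ← map_zpow, ← ofAdd_zsmul]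
        norm_num
      rw [hg]
      simp only [map_mul, hxn, hfy]
      rw [← shiftAut_single n, inl_aut]
      simp [← ofAdd_neg]
    -- the non-finitely-generated subgroup
    set L₀ : Subgroup (FreeGroup ι) := Subgroup.closure (Set.range g) with hL₀
    have hmap : Subgroup.map f L₀ = Subgroup.map inl ⊤ := by
      rw [hL₀, ← closure_delta, MonoidHom.map_closure, MonoidHom.map_closure]
      congr 1
      rw [← Set.range_comp, ← Set.range_comp]
      exact congrArg _ (funext hfg)
    have hLQ : Group.FG ↥(L₀.comap e.toMonoidHom) := h _
    have hL₀fg : Group.FG ↥L₀ := by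
      have h2 : Subgroup.map (e : Q →* FreeGroup ι) (L₀.comap e.toMonoidHom) = L₀ :=
        Subgroup.map_comap_eq_self_of_surjective e.surjective L₀
      exact fg_of_mulEquiv ((e.subgroupMap _).trans (MulEquiv.subgroupCongr h2)) hLQ
    have hfgmap : Group.FG ↥(Subgroup.map f L₀) := by
      haveI := hL₀fg
      exact Group.fg_of_surjective (f.subgroupMap_surjective L₀)
    have hfin : (Subgroup.map f L₀).FG := (Group.fg_iff_subgroup_fg _).1 hfgmap
    rw [hmap] at hfin
    exact not_fg_map_inl hfin

noncomputable def splitEquiv {A B : Type*} [Group A] [Group B] (p : A →* B) (s : B →* A)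
    (hps : ∀ b, p (s b) = b) :
    (↥p.ker ⋊[(MulAut.conjNormal (G := A) (H := p.ker)).comp s] B) ≃* A := by
  have hcompat : ∀ b : B, (p.ker.subtype).comp
      (((MulAut.conjNormal (G := A) (H := p.ker)).comp s b).toMonoidHom)
      = (MulAut.conj (s b)).toMonoidHom.comp p.ker.subtype := by
    intro b
    ext k
    simp [MulAut.conjNormal_apply]
  refine MulEquiv.ofBijective (SemidirectProduct.lift p.ker.subtype s hcompat) ⟨?_, ?_⟩
  · intro u v huv
    have h1 : ∀ w : ↥p.ker ⋊[(MulAut.conjNormal (G := A) (H := p.ker)).comp s] B,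
        SemidirectProduct.lift p.ker.subtype s hcompat w = (w.left : A) * s w.right := fun w => rfl
    rw [h1, h1] at huv
    have hr : u.right = v.right := by
      have := congrArg p huv
      simpa [hps, u.left.2, v.left.2, MonoidHom.mem_ker.1 u.left.2,
        MonoidHom.mem_ker.1 v.left.2] using this
    have hl : (u.left : A) = v.left := by
      rw [hr] at huv
      exact mul_right_cancel huv
    exact SemidirectProduct.ext (Subtype.ext hl) hr
  · intro a
    refine ⟨⟨⟨a * (s (p a))⁻¹, ?_⟩, p a⟩, ?_⟩
    · simp [MonoidHom.mem_ker, hps]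
    · show (a * (s (p a))⁻¹) * s (p a) = a
      simp

noncomputable def sdpCongrLeft {N N' B : Type*} [Group N] [Group N'] [Group B]
    (ψ : B →* MulAut N) (e : N ≃* N') :
    (N ⋊[ψ] B) ≃* (N' ⋊[(MulAut.congr e).toMonoidHom.comp ψ] B) := by
  have h1 : ∀ b : B, (e.toMonoidHom).comp ((ψ b).toMonoidHom)
      = (((MulAut.congr e).toMonoidHom.comp ψ) b).toMonoidHom.comp e.toMonoidHom := by
    intro b; ext n; simp [MulAut.congr]
  have h2 : ∀ b : B, (e.symm.toMonoidHom).comp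
      ((((MulAut.congr e).toMonoidHom.comp ψ) b).toMonoidHom)
      = (ψ b).toMonoidHom.comp e.symm.toMonoidHom := by
    intro b; ext n; simp [MulAut.congr]
  exact
    { toFun := SemidirectProduct.map e.toMonoidHom (MonoidHom.id B) h1
      invFun := SemidirectProduct.map e.symm.toMonoidHom (MonoidHom.id B) h2
      left_inv := by intro w; ext; exacts [e.symm_apply_apply _, rfl]
      right_inv := by intro w; ext; exacts [e.apply_symm_apply _, rfl]
      map_mul' := map_mul _ }


lemma exists_retraction {H : Type*} [Group H] (p : H →* Multiplicative ℤ)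
    (h₀ : H) (hh₀ : p h₀ ≠ 1) :
    ∃ (p' : H →* Multiplicative ℤ) (s : Multiplicative ℤ →* H),
      (∀ b, p' (s b) = b) ∧ p'.ker = p.ker := by
  classical
  let Radd : AddSubgroup ℤ :=
    { carrier := {z : ℤ | ofAdd z ∈ p.range}
      zero_mem' := by
        show ofAdd (0:ℤ) ∈ p.range
        simpa using one_mem p.range
      add_mem' := by
        intro a b ha hb
        show ofAdd (a + b) ∈ p.range
        rw [ofAdd_add]
        exact mul_mem ha hb
      neg_mem' := by
        intro a ha
        show ofAdd (-a) ∈ p.range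
        rw [ofAdd_neg]
        exact inv_mem ha }
  obtain ⟨a, hRa⟩ := Int.subgroup_cyclic Radd
  have hdvd : ∀ h : H, a ∣ (p h).toAdd := by
    intro h
    have h1 : (p h).toAdd ∈ Radd := by
      show ofAdd (p h).toAdd ∈ p.range
      simpa using ⟨h, rfl⟩
    rw [hRa] at h1
    obtain ⟨n, hn⟩ := AddSubgroup.mem_closure_singleton.1 h1
    exact Dvd.intro_left n (by simpa [smul_eq_mul] using hn)
  have ha0 : a ≠ 0 := by
    intro h0
    apply hh₀
    obtain ⟨k, hk⟩ := hdvd h₀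
    rw [h0, zero_mul] at hk
    rw [← ofAdd_toAdd (p h₀), hk]
    rfl
  have ha_mem : ofAdd a ∈ p.range := by
    have h1 : a ∈ Radd := by
      rw [hRa]
      exact AddSubgroup.subset_closure rfl
    exact h1
  obtain ⟨h₀', hph₀'⟩ := ha_mem
  refine ⟨{ toFun := fun h => ofAdd ((p h).toAdd / a)
            map_one' := by simp
            map_mul' := by
              intro u v
              obtain ⟨k, hk⟩ := hdvd u
              obtain ⟨l, hl⟩ := hdvd v
              show ofAdd ((p (u * v)).toAdd / a) = ofAdd ((p u).toAdd / a) * ofAdd ((p v).toAdd / a)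
              rw [map_mul, toAdd_mul, hk, hl, ← ofAdd_add]
              congr 1
              rw [← mul_add, Int.mul_ediv_cancel_left _ ha0, Int.mul_ediv_cancel_left _ ha0,
                Int.mul_ediv_cancel_left _ ha0] },
    zpowersHom _ h₀', ?_, ?_⟩
  · intro b
    show ofAdd ((p (h₀' ^ b.toAdd)).toAdd / a) = b
    rw [map_zpow, toAdd_zpow, hph₀']
    show ofAdd (b.toAdd * (ofAdd a).toAdd / a) = b
    rw [toAdd_ofAdd, Int.mul_ediv_cancel _ ha0, ofAdd_toAdd]
  · ext h
    simp only [MonoidHom.mem_ker]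
    show ofAdd ((p h).toAdd / a) = 1 ↔ p h = 1
    obtain ⟨k, hk⟩ := hdvd h
    constructor
    · intro hh
      have h1 : (p h).toAdd / a = 0 := by
        have := congrArg toAdd hh
        simpa using this
      rw [hk, Int.mul_ediv_cancel_left _ ha0] at h1
      have h2 : (p h).toAdd = 0 := by rw [hk, h1, mul_zero]
      rw [← ofAdd_toAdd (p h), h2]
      rfl
    · intro hh
      rw [hh]
      show ofAdd ((1:Multiplicative ℤ).toAdd / a) = 1
      simp

/-- A group is slender if every subgroup of it is finitely generated.  Here slenderness of
a subgroup `H` is expressed by: every subgroup contained in `H` is finitely generated. -/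
def SlenderSubgroup {G : Type*} [Group G] (H : Subgroup G) : Prop :=
  ∀ K : Subgroup G, K ≤ H → K.FG

/-- In a free-by-cyclic group `G = F ⋊_Φ ℤ` with `F` finitely generated free,
every slender subgroup is isomorphic to the trivial group, to `ℤ`, or to a semidirect
product `ℤ ⋊ ℤ`. -/
theorem stmt7 {α : Type*} [Finite α]
    (Φ : Multiplicative ℤ →* MulAut (FreeGroup α))
    (H : Subgroup (FreeGroup α ⋊[Φ] Multiplicative ℤ))
    (hH : SlenderSubgroup H) :
    H = ⊥ ∨ Nonempty (H ≃* Multiplicative ℤ) ∨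
      ∃ ψ : Multiplicative ℤ →* MulAut (Multiplicative ℤ),
        Nonempty (H ≃* Multiplicative ℤ ⋊[ψ] Multiplicative ℤ) := by
  classical
  set G := FreeGroup α ⋊[Φ] Multiplicative ℤ with hG
  let p : ↥H →* Multiplicative ℤ := rightHom.comp H.subtype
  have hpval : ∀ h : ↥H, p h = ((h : G)).right := fun h => rfl
  let j : ↥p.ker →* FreeGroup α :=
    { toFun := fun k => (((k : ↥H) : G)).left
      map_one' := rfl
      map_mul' := by
        intro a b
        have ha : (((a : ↥H) : G)).right = 1 := a.2
        show ((((a * b : ↥p.ker) : ↥H) : G)).left = _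
        rw [Subgroup.coe_mul, Subgroup.coe_mul, mul_left, ha, map_one, MulAut.one_apply] }
    -- j k = left of k
  have hj_inj : Function.Injective j := by
    intro u v huv
    have hu : (((u : ↥H) : G)).right = 1 := u.2
    have hv : (((v : ↥H) : G)).right = 1 := v.2
    refine Subtype.ext (Subtype.ext (SemidirectProduct.ext huv ?_))
    rw [hu, hv]
  set K : Subgroup (FreeGroup α) := j.range with hK
  let eNK : ↥p.ker ≃* ↥K := MonoidHom.ofInjective hj_inj
  have hslk : ∀ L : Subgroup ↥K, Group.FG ↥L := by
    intro L
    let c : ↥K →* G := (inl (φ := Φ)).comp K.subtype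
    have hc_inj : Function.Injective c := by
      intro u v huv
      exact Subtype.ext (inl_injective huv)
    have hle : Subgroup.map c L ≤ H := by
      rintro _ ⟨u, _, rfl⟩
      obtain ⟨k, hk⟩ := u.2
      have hkr : (((k : ↥H) : G)).right = 1 := k.2
      have : c u = ((k : ↥H) : G) := by
        refine (SemidirectProduct.ext ?_ ?_ : (inl (u : FreeGroup α) : G) = _)
        · exact hk.symm
        · rw [hkr]; rfl
      rw [this]
      exact ((k : ↥H)).2
    have h2 : Group.FG ↥(Subgroup.map c L) := (Group.fg_iff_subgroup_fg _).2 (hH _ hle)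
    exact fg_of_mulEquiv (Subgroup.equivMapOfInjective L c hc_inj).symm h2
  rcases freeGroup_slender_aux hslk with hKs | hKe
  · -- K is trivial, so ker p is trivial
    haveI := hKs
    haveI : Subsingleton ↥p.ker := eNK.toEquiv.subsingleton
    by_cases hp : ∀ h : ↥H, p h = 1
    · left
      have hker_top : p.ker = ⊤ := by
        ext h; simp [MonoidHom.mem_ker, hp]
      haveI : Subsingleton ↥H := (Subgroup.topEquiv.symm.trans
        ((MulEquiv.subgroupCongr hker_top.symm).trans eNK)).toEquiv.subsingleton
      rw [Subgroup.eq_bot_iff_forall]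
      intro x hx
      have : (⟨x, hx⟩ : ↥H) = 1 := Subsingleton.elim _ _
      exact congrArg Subtype.val this
    · right; left
      push_neg at hp
      obtain ⟨h₀, hh₀⟩ := hp
      obtain ⟨p', s, hps, hker'⟩ := exists_retraction p h₀ hh₀
      have hkerbot : p'.ker = ⊥ := by
        rw [hker']
        exact Subgroup.eq_bot_of_subsingleton _
      exact ⟨MulEquiv.ofBijective p' ⟨p'.ker_eq_bot_iff.1 hkerbot, fun b => ⟨s b, hps b⟩⟩⟩
  · by_cases hp : ∀ h : ↥H, p h = 1
    · right; left
      have hker_top : p.ker = ⊤ := by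
        ext h; simp [MonoidHom.mem_ker, hp]
      obtain ⟨eK⟩ := hKe
      exact ⟨((Subgroup.topEquiv.symm.trans
        (MulEquiv.subgroupCongr hker_top.symm)).trans eNK).trans eK⟩
    · right; right
      push_neg at hp
      obtain ⟨h₀, hh₀⟩ := hp
      obtain ⟨eK⟩ := hKe
      obtain ⟨p', s, hps, hker'⟩ := exists_retraction p h₀ hh₀
      let e2 : ↥p'.ker ≃* Multiplicative ℤ := ((MulEquiv.subgroupCongr hker').trans eNK).trans eK
      exact ⟨_, ⟨((splitEquiv p' s hps).symm).trans (sdpCongrLeft _ e2)⟩⟩
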